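/- (Recipe theorem for V.) Let f be a function on vertex- and edge-weighted graphs satisfying: f(G) = α_e·f(G−e) + β_e·f(G/e) for every non-loop edge e (with all α_e ≠ 0), f(G) = (α_e + β_e)·f(G−e) for every loop e, and f(E_m) = ∏_{i=1}^m x_{ω_i} on m isolated vertices of weights ω_1,…,ω_m. Then f(G) = (∏_{e∈E(G)} α_e) · V(G, ω; x, {β_e/α_e}_{e∈E(G)}). -/

import Mathlib

open Finset

structure WGraph (S : Type) (L : Type) where
  V : Type
  E : Type
  [fV : Fintype V]
  [dV : DecidableEq V]
  [fE : Fintype E]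
  [dE : DecidableEq E]
  ends : E → V × V
  ω : V → S
  γ : E → L

attribute [instance] WGraph.fV WGraph.dV WGraph.fE WGraph.dE

namespace WGraph
variable {S L : Type}

def IsLoop (G : WGraph S L) (e : G.E) : Prop := (G.ends e).1 = (G.ends e).2

def delete (G : WGraph S L) (e₀ : G.E) : WGraph S L where
  V := G.V
  E := {e : G.E // e ≠ e₀}
  ends := fun e => G.ends e.1
  ω := G.ω
  γ := fun e => G.γ e.1

def contract [Add S] (G : WGraph S L) (e₀ : G.E) (h : ¬ G.IsLoop e₀) : WGraph S L where
  V := {v : G.V // v ≠ (G.ends e₀).2}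
  E := {e : G.E // e ≠ e₀}
  ends := fun e =>
    ((if hv : (G.ends e.1).1 = (G.ends e₀).2 then ⟨(G.ends e₀).1, h⟩
        else ⟨(G.ends e.1).1, hv⟩ : {v : G.V // v ≠ (G.ends e₀).2}),
     (if hv : (G.ends e.1).2 = (G.ends e₀).2 then ⟨(G.ends e₀).1, h⟩
        else ⟨(G.ends e.1).2, hv⟩))
  ω := fun v =>
    if v.1 = (G.ends e₀).1 then G.ω (G.ends e₀).1 + G.ω (G.ends e₀).2 else G.ω v.1
  γ := fun e => G.γ e.1

def mapEdges {L' : Type} (G : WGraph S L) (φ : L → L') : WGraph S L' where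
  V := G.V
  E := G.E
  ends := G.ends
  ω := G.ω
  γ := φ ∘ G.γ

def stateGraph (G : WGraph S L) (A : Finset G.E) : SimpleGraph G.V :=
  SimpleGraph.fromRel (fun v w => ∃ e ∈ A, G.ends e = (v, w))

noncomputable instance (G : WGraph S L) (A : Finset G.E) :
    Fintype (G.stateGraph A).ConnectedComponent := Fintype.ofFinite _

noncomputable def kcomp (G : WGraph S L) (A : Finset G.E) : ℕ :=
  Fintype.card (G.stateGraph A).ConnectedComponent

open scoped Classical in
noncomputable def compWeight [AddCommMonoid S] (G : WGraph S L) (A : Finset G.E)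
    (c : (G.stateGraph A).ConnectedComponent) : S :=
  ∑ v ∈ Finset.univ.filter (fun v => (G.stateGraph A).connectedComponentMk v = c), G.ω v

end WGraph

/-- recipe (universality) theorem for the V-polynomial.  Each edge carries a
pair of parameters `(α_e, β_e)`; `f` satisfies the generalized deletion-contraction rules and
`V` the defining rules of the V-polynomial. -/
theorem V_polynomial_recipe {S : Type} [AddCommMonoid S] {R : Type} [Field R]
    (x : S → R) (f : WGraph S (R × R) → R) (Vpoly : WGraph S R → R)
    (hf1 : ∀ (G : WGraph S (R × R)) (e : G.E) (h : ¬ G.IsLoop e),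
      f G = (G.γ e).1 * f (G.delete e) + (G.γ e).2 * f (G.contract e h))
    (hf2 : ∀ (G : WGraph S (R × R)) (e : G.E), G.IsLoop e →
      f G = ((G.γ e).1 + (G.γ e).2) * f (G.delete e))
    (hf3 : ∀ G : WGraph S (R × R), IsEmpty G.E → f G = ∏ v : G.V, x (G.ω v))
    (hV1 : ∀ (G : WGraph S R) (e : G.E) (h : ¬ G.IsLoop e),
      Vpoly G = Vpoly (G.delete e) + G.γ e * Vpoly (G.contract e h))
    (hV2 : ∀ (G : WGraph S R) (e : G.E), G.IsLoop e →
      Vpoly G = (G.γ e + 1) * Vpoly (G.delete e))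
    (hV3 : ∀ G : WGraph S R, IsEmpty G.E → Vpoly G = ∏ v : G.V, x (G.ω v)) :
    ∀ G : WGraph S (R × R), (∀ e : G.E, (G.γ e).1 ≠ 0) →
      f G = (∏ e : G.E, (G.γ e).1) *
        Vpoly (G.mapEdges (fun p => p.2 / p.1)) := by

  suffices H : ∀ n (G : WGraph S (R × R)), Fintype.card G.E = n →
      (∀ e : G.E, (G.γ e).1 ≠ 0) →
      f G = (∏ e : G.E, (G.γ e).1) * Vpoly (G.mapEdges (fun p => p.2 / p.1)) by
    intro G hG; exact H _ G rfl hG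
  intro n
  induction n with
  | zero =>
    intro G hc hG
    have hE : IsEmpty G.E := Fintype.card_eq_zero_iff.mp hc
    have hE' : IsEmpty (G.mapEdges (fun p : R × R => p.2 / p.1)).E := hE
    rw [hf3 G hE, hV3 _ hE']
    have : (Finset.univ : Finset G.E) = ∅ := Finset.univ_eq_empty
    rw [this, Finset.prod_empty, one_mul]
    rfl
  | succ n ih =>
    intro G hc hG
    have hne : Nonempty G.E := by
      rw [← Fintype.card_pos_iff]; omega
    obtain ⟨e⟩ := hne
    have hcard : Fintype.card {e' : G.E // e' ≠ e} = n := by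
      have := Fintype.card_subtype_compl (fun e' : G.E => e' = e)
      simp only [Fintype.card_subtype_eq] at this
      have h2 : Fintype.card {e' : G.E // ¬ e' = e} = Fintype.card G.E - 1 := this
      have : Fintype.card {e' : G.E // e' ≠ e} = Fintype.card G.E - 1 := h2
      omega
    have hprod : (∏ e' : G.E, (G.γ e').1)
        = (G.γ e).1 * ∏ e' : {e' : G.E // e' ≠ e}, (G.γ e'.1).1 := by
      rw [← Finset.mul_prod_erase Finset.univ _ (Finset.mem_univ e)]
      congr 1
      exact Finset.prod_subtype (Finset.univ.erase e)
        (fun e' => by simp) (fun e' => (G.γ e').1)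
    by_cases hl : G.IsLoop e
    · have hPdel : (∏ e' : (G.delete e).E, ((G.delete e).γ e').1)
          = ∏ e' : {e' : G.E // e' ≠ e}, (G.γ e'.1).1 := rfl
      rw [hf2 G e hl, ih (G.delete e) hcard (fun e' => hG e'.1), hPdel]
      have hVstep := hV2 (G.mapEdges (fun p : R × R => p.2 / p.1)) e hl
      have hdel : ((G.delete e).mapEdges (fun p : R × R => p.2 / p.1))
          = ((G.mapEdges (fun p : R × R => p.2 / p.1)).delete e) := rfl
      rw [hdel, ← mul_assoc]
      rw [hVstep]
      have hγ : ((G.mapEdges (fun p : R × R => p.2 / p.1)).γ e) = (G.γ e).2 / (G.γ e).1 := rfl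
      rw [hγ, hprod]
      have hα := hG e
      field_simp
      ring
    · have hPdel : (∏ e' : (G.delete e).E, ((G.delete e).γ e').1)
          = ∏ e' : {e' : G.E // e' ≠ e}, (G.γ e'.1).1 := rfl
      have hPcon : (∏ e' : (G.contract e hl).E, ((G.contract e hl).γ e').1)
          = ∏ e' : {e' : G.E // e' ≠ e}, (G.γ e'.1).1 := rfl
      rw [hf1 G e hl, ih (G.delete e) hcard (fun e' => hG e'.1),
        ih (G.contract e hl) hcard (fun e' => hG e'.1), hPdel, hPcon]
      have hVstep := hV1 (G.mapEdges (fun p : R × R => p.2 / p.1)) e hl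
      have hdel : ((G.delete e).mapEdges (fun p : R × R => p.2 / p.1))
          = ((G.mapEdges (fun p : R × R => p.2 / p.1)).delete e) := rfl
      have hcon : ((G.contract e hl).mapEdges (fun p : R × R => p.2 / p.1))
          = ((G.mapEdges (fun p : R × R => p.2 / p.1)).contract e hl) := rfl
      rw [hdel, hcon, hVstep]
      have hγ : ((G.mapEdges (fun p : R × R => p.2 / p.1)).γ e) = (G.γ e).2 / (G.γ e).1 := rfl
      rw [hγ, hprod]
      have hα := hG e
      field_simp
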